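/- arXiv:1705.09210 — 4 statements merged into one kernel-verified Lean document; each statement's English description precedes it below -/
import Mathlib

section
/- Let x̃₁, …, x̃_m ∈ ℝⁿ and suppose x_k = Σ_{i=1}^m λᵢ x̃ᵢ with λᵢ ≥ 0 and Σ_{i=1}^m λᵢ = 1 minimizes f over the convex hull of {x̃₁, …, x̃_m}. If for some index j one has (2Qx_k + c)ᵀ(x̃ⱼ − x_k) > 0, then λⱼ = 0. -/
open Matrix

/-- Every vertex of the master set violating the shrinking-cut condition
has zero weight in the convex combination expressing the master solution. -/
theorem stmt4 {n m : ℕ} (Q : Matrix (Fin n) (Fin n) ℝ) (hQ : Q.PosSemidef) (c : Fin n → ℝ)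
    (xt : Fin m → (Fin n → ℝ)) (lam : Fin m → ℝ)
    (hlam : ∀ i, 0 ≤ lam i) (hsum : ∑ i, lam i = 1)
    (xk : Fin n → ℝ) (hxk : xk = ∑ i, lam i • xt i)
    (hmin : ∀ y ∈ convexHull ℝ (Set.range xt),
      xk ⬝ᵥ (Q *ᵥ xk) + c ⬝ᵥ xk ≤ y ⬝ᵥ (Q *ᵥ y) + c ⬝ᵥ y)
    (j : Fin m) (hj : 0 < ((2 : ℝ) • (Q *ᵥ xk) + c) ⬝ᵥ (xt j - xk)) :
    lam j = 0 := by
  by_contra hne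
  have hlj : 0 < lam j := lt_of_le_of_ne (hlam j) (Ne.symm hne)
  have hsym : ∀ u v : Fin n → ℝ, u ⬝ᵥ (Q *ᵥ v) = v ⬝ᵥ (Q *ᵥ u) := by
    intro u v
    have hT : Qᵀ = Q := by simpa [Matrix.conjTranspose_eq_transpose_of_trivial] using hQ.1.eq
    rw [dotProduct_mulVec, dotProduct_comm, ← mulVec_transpose, hT]
  -- lam j < 1
  have hlt1 : lam j < 1 := by
    rcases lt_or_eq_of_le (Finset.single_le_sum (fun i _ => hlam i) (Finset.mem_univ j)) with h | h
    · rw [hsum] at h; exact h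
    · exfalso
      have hj1 : lam j = 1 := by rw [h, hsum]
      have hrest : ∑ i ∈ Finset.univ.erase j, lam i = 0 := by
        have := Finset.add_sum_erase Finset.univ lam (Finset.mem_univ j)
        rw [hsum] at this
        linarith
      have hz : ∀ i, i ≠ j → lam i = 0 := by
        intro i hi
        have := (Finset.sum_eq_zero_iff_of_nonneg (fun i _ => hlam i)).mp hrest
        exact this i (Finset.mem_erase.mpr ⟨hi, Finset.mem_univ i⟩)
      have hxkj : xk = xt j := by
        rw [hxk, ← Finset.add_sum_erase Finset.univ (fun i => lam i • xt i) (Finset.mem_univ j)]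
        have hz' : ∑ i ∈ Finset.univ.erase j, lam i • xt i = 0 := by
          apply Finset.sum_eq_zero
          intro i hi
          rw [hz i (Finset.mem_erase.mp hi).1, zero_smul]
        rw [hz', add_zero, hj1, one_smul]
      rw [hxkj, sub_self, dotProduct_zero] at hj
      exact lt_irrefl 0 hj
  set d : Fin n → ℝ := xk - xt j with hd
  set g : ℝ := ((2 : ℝ) • (Q *ᵥ xk) + c) ⬝ᵥ (xt j - xk) with hg
  set A : ℝ := d ⬝ᵥ (Q *ᵥ d) with hA
  have hA0 : 0 ≤ A := by simpa using hQ.dotProduct_mulVec_nonneg d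
  set t : ℝ := min (lam j / (1 - lam j)) (g / (2 * (A + 1))) with htdef
  have h1l : 0 < 1 - lam j := by linarith
  have ht0 : 0 < t := by
    apply lt_min
    · exact div_pos hlj h1l
    · exact div_pos hj (by linarith)
  have ht1 : t * (1 - lam j) ≤ lam j := by
    have := min_le_left (lam j / (1 - lam j)) (g / (2 * (A + 1)))
    rw [← htdef] at this
    calc t * (1 - lam j) ≤ (lam j / (1 - lam j)) * (1 - lam j) := by
          exact mul_le_mul_of_nonneg_right this (le_of_lt h1l)
      _ = lam j := by field_simp
  have ht2 : t * (A + 1) ≤ g / 2 := by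
    have hm := min_le_right (lam j / (1 - lam j)) (g / (2 * (A + 1)))
    rw [← htdef] at hm
    have hApos : (0:ℝ) < A + 1 := by linarith
    calc t * (A + 1) ≤ (g / (2 * (A + 1))) * (A + 1) := by
          exact mul_le_mul_of_nonneg_right hm (le_of_lt hApos)
      _ = g / 2 := by field_simp
  -- the perturbed point
  set y : Fin n → ℝ := xk + t • d with hy
  -- weights
  set w : Fin m → ℝ := fun i => (1 + t) * lam i - (if i = j then t else 0) with hw
  have hw0 : ∀ i ∈ Finset.univ, 0 ≤ w i := by
    intro i _
    by_cases hij : i = j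
    · subst hij
      simp only [hw, eq_self_iff_true, if_true]
      nlinarith [ht1]
    · simp only [hw, if_neg hij]
      nlinarith [hlam i, ht0]
  have hwsum : ∑ i, w i = 1 := by
    simp only [hw]
    rw [Finset.sum_sub_distrib, ← Finset.mul_sum, hsum, Finset.sum_ite_eq' Finset.univ j]
    simp
  have hycomb : y = ∑ i, w i • xt i := by
    simp only [hw, sub_smul, mul_smul]
    rw [Finset.sum_sub_distrib, ← Finset.smul_sum, ← hxk]
    have : ∑ i, (if i = j then t else 0) • xt i = t • xt j := by
      rw [Finset.sum_congr rfl (fun i _ => by rw [ite_smul, zero_smul]),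
        Finset.sum_ite_eq' Finset.univ j]
      simp
    rw [this, hy, hd]
    module
  have hymem : y ∈ convexHull ℝ (Set.range xt) := by
    rw [hycomb, ← Finset.univ.centerMass_eq_of_sum_1 xt hwsum]
    exact Finset.univ.centerMass_mem_convexHull hw0 (by rw [hwsum]; norm_num)
      (fun i _ => Set.mem_range_self i)
  -- expansion of f(y)
  have hgd : g = -(2 * (d ⬝ᵥ (Q *ᵥ xk)) + c ⬝ᵥ d) := by
    have hnd : xt j - xk = -d := by rw [hd, neg_sub]
    rw [hg, hnd, dotProduct_neg, add_dotProduct, smul_dotProduct, dotProduct_comm (Q *ᵥ xk),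
      smul_eq_mul]
  have hexp : y ⬝ᵥ (Q *ᵥ y) + c ⬝ᵥ y
      = (xk ⬝ᵥ (Q *ᵥ xk) + c ⬝ᵥ xk) - t * g + t ^ 2 * A := by
    rw [hy, hgd]
    simp only [mulVec_add, mulVec_smul, dotProduct_add, add_dotProduct, smul_dotProduct,
      dotProduct_smul, smul_eq_mul]
    rw [hsym xk d]
    ring
  have hle := hmin y hymem
  rw [hexp] at hle
  -- derive contradiction
  have h1 : t * g ≤ t ^ 2 * A := by linarith
  have h2 : g ≤ t * A := by
    have := (mul_le_mul_iff_right₀ ht0).mp (by nlinarith : t * g ≤ t * (t * A))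
    exact this
  nlinarith [ht2, ht0, hj, hA0]
end

section
/- Let S ⊆ ℝⁿ be a convex set, let x_k, x̃_k ∈ S satisfy (2Qx_k + c)ᵀ(x̃_k − x_k) < 0, and let x_{k+1} be a minimizer of f over S. Then f(x_{k+1}) < f(x_k). -/
open Matrix

/-- Strict decrease between consecutive master solutions: if `x_k, x̃_k ∈ S`
with `∇f(x_k)ᵀ(x̃_k - x_k) < 0` and `x_{k+1}` minimizes `f` over the convex
set `S`, then `f(x_{k+1}) < f(x_k)`. -/
theorem stmt5 {n : ℕ} (Q : Matrix (Fin n) (Fin n) ℝ) (hQ : Q.PosSemidef) (c : Fin n → ℝ)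
    (S : Set (Fin n → ℝ)) (hS : Convex ℝ S)
    (xk xtk : Fin n → ℝ) (hxk : xk ∈ S) (hxtk : xtk ∈ S)
    (hdesc : ((2 : ℝ) • (Q *ᵥ xk) + c) ⬝ᵥ (xtk - xk) < 0)
    (xk1 : Fin n → ℝ) (hxk1 : xk1 ∈ S)
    (hmin : ∀ y ∈ S, xk1 ⬝ᵥ (Q *ᵥ xk1) + c ⬝ᵥ xk1 ≤ y ⬝ᵥ (Q *ᵥ y) + c ⬝ᵥ y) :
    xk1 ⬝ᵥ (Q *ᵥ xk1) + c ⬝ᵥ xk1 < xk ⬝ᵥ (Q *ᵥ xk) + c ⬝ᵥ xk := by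
  set d : Fin n → ℝ := xtk - xk with hd
  set g : ℝ := ((2 : ℝ) • (Q *ᵥ xk) + c) ⬝ᵥ d with hg
  set a : ℝ := d ⬝ᵥ (Q *ᵥ d) with ha
  have ha0 : 0 ≤ a := by simpa using hQ.dotProduct_mulVec_nonneg d
  have hT : Qᵀ = Q := by simpa using hQ.1.eq
  have hsym2 : ∀ u v : Fin n → ℝ, u ⬝ᵥ (Q *ᵥ v) = v ⬝ᵥ (Q *ᵥ u) := by
    intro u v
    rw [dotProduct_mulVec, ← Matrix.mulVec_transpose, hT, dotProduct_comm]
  have hsymm : xk ⬝ᵥ (Q *ᵥ d) = (Q *ᵥ xk) ⬝ᵥ d :=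
    (hsym2 xk d).trans (dotProduct_comm _ _)
  have hg0 : g < 0 := hdesc
  -- choose step size t
  have hta : a + 1 > 0 := by linarith
  set t : ℝ := min 1 (-g / (a + 1)) with ht
  have ht0 : 0 < t := lt_min one_pos (div_pos (by linarith) hta)
  have ht1 : t ≤ 1 := min_le_left _ _
  have htb : t ≤ -g / (a + 1) := min_le_right _ _
  have key : t * g + t ^ 2 * a < 0 := by
    have hta' : t * a < -g := by
      rcases eq_or_lt_of_le ha0 with h | h
      · rw [← h]; linarith
      · calc t * a ≤ (-g / (a + 1)) * a := by nlinarith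
          _ < -g := by rw [div_mul_eq_mul_div, div_lt_iff₀ hta]; nlinarith
    nlinarith
  have hy : xk + t • d ∈ S := by
    have := hS hxk hxtk (a := 1 - t) (b := t) (by linarith) (le_of_lt ht0) (by ring)
    convert this using 1
    simp only [hd]
    module
  have hle := hmin _ hy
  have hexp : (xk + t • d) ⬝ᵥ (Q *ᵥ (xk + t • d)) + c ⬝ᵥ (xk + t • d)
      = (xk ⬝ᵥ (Q *ᵥ xk) + c ⬝ᵥ xk) + (t * g + t ^ 2 * a) := by
    simp only [hg, ha, hd, mulVec_add, mulVec_smul, dotProduct_add, add_dotProduct,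
      dotProduct_smul, smul_dotProduct, smul_eq_mul]
    have hsymm' : xk ⬝ᵥ (Q *ᵥ (xtk - xk)) = (Q *ᵥ xk) ⬝ᵥ (xtk - xk) := by
      simpa [hd] using hsymm
    linear_combination t * hsym2 (xtk - xk) xk + 2 * t * hsymm'
  rw [hexp] at hle
  linarith
end

section
/- Let X ⊆ ℝⁿ, let x₀, …, x_{k−1} ∈ ℝⁿ, and define C_k = {x ∈ ℝⁿ : (2Qxᵢ + c)ᵀ(x − xᵢ) ≤ 0 for all i = 0, …, k−1}. Suppose x_k ∈ X ∩ C_k minimizes f over X ∩ C_k and f(x_k) ≤ f(xᵢ) for all i = 0, …, k−1. Then x_k minimizes f over X, i.e. f(x_k) ≤ f(x) for all x ∈ X. -/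
open Matrix

lemma quad_expand {n : ℕ} (Q : Matrix (Fin n) (Fin n) ℝ) (hQ : Qᵀ = Q)
    (c a y : Fin n → ℝ) :
    y ⬝ᵥ (Q *ᵥ y) + c ⬝ᵥ y =
      a ⬝ᵥ (Q *ᵥ a) + c ⬝ᵥ a + ((2 : ℝ) • (Q *ᵥ a) + c) ⬝ᵥ (y - a)
        + (y - a) ⬝ᵥ (Q *ᵥ (y - a)) := by
  have hsym : ∀ u v : Fin n → ℝ, u ⬝ᵥ (Q *ᵥ v) = v ⬝ᵥ (Q *ᵥ u) := by
    intro u v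
    conv_lhs => rw [← hQ]
    rw [dotProduct_mulVec, vecMul_transpose, dotProduct_comm]
  simp only [mulVec_sub, dotProduct_sub, sub_dotProduct, add_dotProduct,
    smul_dotProduct, smul_eq_mul, dotProduct_sub]
  rw [hsym a y, dotProduct_comm (Q *ᵥ a) y, dotProduct_comm (Q *ᵥ a) a]
  ring

/-- Correctness of the shrinking cuts (Proposition 4): if `x_k` minimizes `f`
over `X ∩ C_k`, where `C_k` is the intersection of the shrinking cuts generated
at `x₀, …, x_{k-1}`, and `f(x_k) ≤ f(xᵢ)` for all `i`, then `x_k` minimizes `f`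
over the whole set `X`. -/
theorem stmt9 {n k : ℕ} (Q : Matrix (Fin n) (Fin n) ℝ) (hQ : Q.PosSemidef) (c : Fin n → ℝ)
    (X : Set (Fin n → ℝ)) (x : Fin k → (Fin n → ℝ))
    (Ck : Set (Fin n → ℝ))
    (hCk : Ck = {y | ∀ i : Fin k, ((2 : ℝ) • (Q *ᵥ x i) + c) ⬝ᵥ (y - x i) ≤ 0})
    (xk : Fin n → ℝ) (hxk : xk ∈ X ∩ Ck)
    (hmin : ∀ y ∈ X ∩ Ck, xk ⬝ᵥ (Q *ᵥ xk) + c ⬝ᵥ xk ≤ y ⬝ᵥ (Q *ᵥ y) + c ⬝ᵥ y)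
    (hdec : ∀ i : Fin k,
      xk ⬝ᵥ (Q *ᵥ xk) + c ⬝ᵥ xk ≤ (x i) ⬝ᵥ (Q *ᵥ x i) + c ⬝ᵥ x i) :
    ∀ y ∈ X, xk ⬝ᵥ (Q *ᵥ xk) + c ⬝ᵥ xk ≤ y ⬝ᵥ (Q *ᵥ y) + c ⬝ᵥ y := by
  intro y hy
  by_cases hyC : y ∈ Ck
  · exact hmin y ⟨hy, hyC⟩
  · rw [hCk] at hyC
    simp only [Set.mem_setOf_eq, not_forall, not_le] at hyC
    obtain ⟨i, hi⟩ := hyC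
    have hsym : Qᵀ = Q := by
      have := hQ.1
      simpa [Matrix.IsHermitian, Matrix.conjTranspose_eq_transpose_of_trivial] using this
    have hpsd : 0 ≤ (y - x i) ⬝ᵥ (Q *ᵥ (y - x i)) := by
      have := hQ.dotProduct_mulVec_nonneg (y - x i)
      simpa using this
    have key := quad_expand Q hsym c (x i) y
    have := hdec i
    nlinarith [hi, hpsd, key, this]
end

section
/- Let Q be a symmetric positive definite n×n real matrix, c ∈ ℝⁿ, and f(x) = xᵀQx + cᵀx. Let d₀, …, d_{n−1} ∈ ℝⁿ be nonzero mutually Q-conjugate directions (dᵢᵀQdⱼ = 0 for i ≠ j). Starting from any x₀ ∈ ℝⁿ, define iterates by x_{k+1} = x_k + α_k d_k where α_k = −(2Qx_k + c)ᵀd_k / (2 d_kᵀQ d_k) is the exact minimizer of α ↦ f(x_k + α d_k). Then x_n is the global minimizer of f over ℝⁿ: f(x_n) ≤ f(y) for all y ∈ ℝⁿ. -/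
open Matrix

private lemma sum_dp {n : ℕ} (u : Fin n → ℝ) (f : Fin n → (Fin n → ℝ)) :
    (∑ i, f i) ⬝ᵥ u = ∑ i, f i ⬝ᵥ u := by
  simp only [dotProduct, Finset.sum_apply, Finset.sum_mul]
  exact Finset.sum_comm

/-- The conjugate directions method with exact line searches minimizes the
convex quadratic `f(x) = xᵀQx + cᵀx` (with `Q` symmetric positive definite)
in at most `n` steps: after `n` exact-line-search steps along nonzero mutually
`Q`-conjugate directions, `x_n` is the global minimizer of `f`. -/
theorem stmt12 {n : ℕ} (Q : Matrix (Fin n) (Fin n) ℝ) (hQ : Q.PosDef) (c : Fin n → ℝ)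
    (d : Fin n → (Fin n → ℝ)) (hd : ∀ i, d i ≠ 0)
    (hconj : ∀ i j, i ≠ j → d i ⬝ᵥ (Q *ᵥ d j) = 0)
    (x : ℕ → (Fin n → ℝ))
    (hstep : ∀ k : Fin n,
      x (k.val + 1) = x k.val +
        (-(((2 : ℝ) • (Q *ᵥ x k.val) + c) ⬝ᵥ d k) / (2 * (d k ⬝ᵥ (Q *ᵥ d k)))) • d k) :
    ∀ y : Fin n → ℝ,
      (x n) ⬝ᵥ (Q *ᵥ x n) + c ⬝ᵥ x n ≤ y ⬝ᵥ (Q *ᵥ y) + c ⬝ᵥ y := by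
  have hsym : ∀ u v : Fin n → ℝ, u ⬝ᵥ (Q *ᵥ v) = v ⬝ᵥ (Q *ᵥ u) := by
    have h : Qᵀ = Q := by
      have := hQ.isHermitian.eq; rwa [conjTranspose_eq_transpose_of_trivial] at this
    intro u v
    rw [dotProduct_mulVec]; nth_rewrite 1 [← h]
    rw [vecMul_transpose, dotProduct_comm]
  -- gradient at x n is orthogonal to each direction
  have hgd : ∀ k : Fin n, ((2:ℝ) • (Q *ᵥ x n) + c) ⬝ᵥ d k = 0 := by
    intro k
    have hpos : 0 < d k ⬝ᵥ (Q *ᵥ d k) := by simpa using hQ.dotProduct_mulVec_pos (hd k)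
    have hls : ((2:ℝ) • (Q *ᵥ x (k.val+1)) + c) ⬝ᵥ d k = 0 := by
      rw [hstep k]
      simp only [mulVec_add, mulVec_smul, add_dotProduct, smul_dotProduct,
        smul_eq_mul, smul_add]
      have hqc : (Q *ᵥ d k) ⬝ᵥ d k = d k ⬝ᵥ (Q *ᵥ d k) := dotProduct_comm _ _
      rw [hqc]
      field_simp
      ring
    have hinv : ∀ m, k.val + 1 ≤ m → m ≤ n →
        (Q *ᵥ x m) ⬝ᵥ d k = (Q *ᵥ x (k.val+1)) ⬝ᵥ d k := by
      intro m hm1 hm2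
      induction m with
      | zero => omega
      | succ m ih =>
        rcases Nat.lt_or_ge m (k.val+1) with h | h
        · have : m = k.val := by omega
          rw [this]
        · have hmn : m < n := by omega
          have hs := hstep ⟨m, hmn⟩
          simp only [Fin.val_mk] at hs
          rw [hs]
          have hne : (⟨m, hmn⟩ : Fin n) ≠ k := by
            intro he
            have : m = k.val := by simpa using congrArg Fin.val he
            omega
          have hc0 : (Q *ᵥ d ⟨m, hmn⟩) ⬝ᵥ d k = 0 := by
            rw [dotProduct_comm, ← hsym]
            exact hconj _ _ hne
          simp only [mulVec_add, mulVec_smul, add_dotProduct, smul_dotProduct,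
            smul_eq_mul, hc0, mul_zero, add_zero]
          exact ih (by omega) (by omega)
    have h1 : (Q *ᵥ x n) ⬝ᵥ d k = (Q *ᵥ x (k.val+1)) ⬝ᵥ d k :=
      hinv n (by omega) le_rfl
    simp only [add_dotProduct, smul_dotProduct, smul_eq_mul] at hls ⊢
    rw [h1]; exact hls
  -- the directions are linearly independent
  have hli : LinearIndependent ℝ d := by
    rw [Fintype.linearIndependent_iff]
    intro w hw j
    have hpos : 0 < d j ⬝ᵥ (Q *ᵥ d j) := by simpa using hQ.dotProduct_mulVec_pos (hd j)
    have hsum : (∑ i, w i • d i) ⬝ᵥ (Q *ᵥ d j) = w j * (d j ⬝ᵥ (Q *ᵥ d j)) := by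
      rw [sum_dp]
      rw [Finset.sum_eq_single j]
      · rw [smul_dotProduct]; rfl
      · intro i _ hij
        rw [smul_dotProduct, hconj i j hij, smul_eq_mul, mul_zero]
      · intro h; exact absurd (Finset.mem_univ j) h
    rw [hw, zero_dotProduct] at hsum
    rcases mul_eq_zero.mp hsum.symm with h | h
    · exact h
    · exact absurd h (ne_of_gt hpos)
  -- d spans everything
  have hspan : Submodule.span ℝ (Set.range d) = ⊤ :=
    hli.span_eq_top_of_card_eq_finrank' (by simp)
  -- the gradient vanishes against every vector
  have hgzero : ∀ v : Fin n → ℝ, ((2:ℝ) • (Q *ᵥ x n) + c) ⬝ᵥ v = 0 := by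
    intro v
    have hv : v ∈ Submodule.span ℝ (Set.range d) := hspan ▸ Submodule.mem_top
    obtain ⟨w, hw⟩ := (Submodule.mem_span_range_iff_exists_fun ℝ).mp hv
    rw [← hw, dotProduct_comm, sum_dp]
    apply Finset.sum_eq_zero
    intro i _
    rw [smul_dotProduct, dotProduct_comm, hgd i, smul_eq_mul, mul_zero]
  -- conclude
  intro y
  set z : Fin n → ℝ := y - x n with hz
  have hy : y = x n + z := by simp [hz]
  have hzQz : 0 ≤ z ⬝ᵥ (Q *ᵥ z) := by simpa using hQ.posSemidef.dotProduct_mulVec_nonneg z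
  have hg := hgzero z
  have hzx : z ⬝ᵥ (Q *ᵥ x n) = x n ⬝ᵥ (Q *ᵥ z) := hsym z (x n)
  have hc2 : (Q *ᵥ x n) ⬝ᵥ z = z ⬝ᵥ (Q *ᵥ x n) := dotProduct_comm _ _
  rw [hy]
  simp only [mulVec_add, dotProduct_add, add_dotProduct, smul_dotProduct,
    smul_eq_mul] at hg ⊢
  linarith
end
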